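/- Let H = H₁ ⊕ H₂ be a direct sum of Hilbert spaces, V₁ the graph of a closed operator A₁ : H₁ → H₂ and V₂ the graph (with coordinates swapped) of a bounded operator A₂ : H₂ → H₁. If A₁ ∘ A₂ is compact, then the intersection V₁ ∩ V₂ is finite-dimensional. -/
import Mathlib


/-- Let `V₁` be the graph of a closed (possibly unbounded) operator
`A₁ : H₁ →ₗ. H₂` and `V₂` the swapped graph of a bounded operator `A₂ : H₂ →L H₁`.
If `A₁ ∘ A₂` is compact, then `V₁ ∩ V₂` is finite-dimensional. -/
theorem stmt2
    {H₁ H₂ : Type}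
    [NormedAddCommGroup H₁] [InnerProductSpace ℂ H₁] [CompleteSpace H₁]
    [NormedAddCommGroup H₂] [InnerProductSpace ℂ H₂] [CompleteSpace H₂]
    (A₁ : H₁ →ₗ.[ℂ] H₂)
    (hclosed : IsClosed (A₁.graph : Set (H₁ × H₂)))
    (A₂ : H₂ →L[ℂ] H₁)
    (hrange : ∀ y : H₂, A₂ y ∈ A₁.domain)
    (hcompact : IsCompactOperator (fun y : H₂ => A₁ ⟨A₂ y, hrange y⟩))
    (V₂ : Submodule ℂ (H₁ × H₂))
    (hV₂ : (V₂ : Set (H₁ × H₂)) = {p : H₁ × H₂ | p.1 = A₂ p.2}) :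
    FiniteDimensional ℂ ↥(A₁.graph ⊓ V₂) := by
  -- T = A₁ ∘ A₂ as a linear map H₂ → H₂
  set T : H₂ →ₗ[ℂ] H₂ :=
    A₁.toFun.comp ((A₂ : H₂ →ₗ[ℂ] H₁).codRestrict A₁.domain hrange) with hT
  have hTapp : ∀ y : H₂, T y = A₁ ⟨A₂ y, hrange y⟩ := fun y => rfl
  have hTcompact : IsCompactOperator T := hcompact
  have hTcont : Continuous T := hTcompact.continuous
  -- the eigenspace K = ker (T - id)
  set K : Submodule ℂ H₂ := LinearMap.ker (T - LinearMap.id) with hK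
  have hKmem : ∀ y : H₂, y ∈ K ↔ T y = y := by
    intro y
    simp [hK, LinearMap.mem_ker, sub_eq_zero]
  -- K is finite dimensional by Riesz's theorem
  have hKclosed : IsClosed (K : Set H₂) := by
    have : (K : Set H₂) = {y | T y - y = 0} := by
      ext y; simp [hK, LinearMap.mem_ker, sub_eq_zero]
    rw [this]
    exact isClosed_eq (hTcont.sub continuous_id) continuous_const
  have hKfin : FiniteDimensional ℂ ↥K := by
    obtain ⟨C, hCcomp, hCsub⟩ := hTcompact.image_closedBall_subset_compact 1
    have hball : IsCompact (Metric.closedBall (0 : ↥K) 1) := by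
      rw [Subtype.isCompact_iff]
      have himg : Subtype.val '' Metric.closedBall (0 : ↥K) 1
          = (K : Set H₂) ∩ Metric.closedBall (0 : H₂) 1 := by
        ext y
        constructor
        · rintro ⟨⟨z, hz⟩, hzb, rfl⟩
          refine ⟨hz, ?_⟩
          simpa [Metric.mem_closedBall, dist_eq_norm] using hzb
        · rintro ⟨hy, hyb⟩
          exact ⟨⟨y, hy⟩, by simpa [Metric.mem_closedBall, dist_eq_norm] using hyb, rfl⟩
      rw [himg]
      have hsubC : (K : Set H₂) ∩ Metric.closedBall (0 : H₂) 1 ⊆ C := by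
        rintro y ⟨hy, hyb⟩
        have : T y = y := (hKmem y).mp hy
        exact hCsub ⟨y, hyb, this⟩
      exact hCcomp.of_isClosed_subset
        (hKclosed.inter Metric.isClosed_closedBall) hsubC
    exact FiniteDimensional.of_isCompact_closedBall₀ ℂ one_pos hball
  -- map the intersection into K via the second coordinate
  have hmemV₂ : ∀ p : H₁ × H₂, p ∈ V₂ → p.1 = A₂ p.2 := by
    intro p hp
    rw [← SetLike.mem_coe, hV₂] at hp
    exact hp
  have hmemK : ∀ p : H₁ × H₂, p ∈ A₁.graph ⊓ V₂ → p.2 ∈ K := by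
    intro p hp
    rw [Submodule.mem_inf] at hp
    obtain ⟨hp1, hp2⟩ := hp
    have hp2' : p.1 = A₂ p.2 := hmemV₂ p hp2
    rw [LinearPMap.mem_graph_iff] at hp1
    obtain ⟨y, hy1, hy2⟩ := hp1
    rw [hKmem, hTapp]
    have : (⟨A₂ p.2, hrange p.2⟩ : A₁.domain) = y := by
      ext; rw [hy1, hp2']
    rw [this, hy2]
  let f : ↥(A₁.graph ⊓ V₂) →ₗ[ℂ] ↥K :=
    ((LinearMap.snd ℂ H₁ H₂).comp (A₁.graph ⊓ V₂).subtype).codRestrict K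
      (fun p => hmemK p p.2)
  have hfinj : Function.Injective f := by
    intro p q hpq
    have h2 : (p : H₁ × H₂).2 = (q : H₁ × H₂).2 := congrArg Subtype.val hpq
    have hp1 : (p : H₁ × H₂).1 = A₂ (p : H₁ × H₂).2 :=
      hmemV₂ _ ((Submodule.mem_inf.mp p.2).2)
    have hq1 : (q : H₁ × H₂).1 = A₂ (q : H₁ × H₂).2 :=
      hmemV₂ _ ((Submodule.mem_inf.mp q.2).2)
    have : (p : H₁ × H₂) = (q : H₁ × H₂) := by
      ext
      · rw [hp1, hq1, h2]
      · exact h2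
    exact Subtype.ext this
  exact Module.Finite.of_injective f hfinj
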